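/- arXiv:1406.5432 — 6 statements merged into one kernel-verified Lean document; each statement's English description precedes it below -/
import Mathlib

section
/- Let C be a compact convex subset of ℝⁿ. Then (1/tⁿ)·#{z ∈ ℤⁿ : z ∈ t·C} converges to the Lebesgue measure of C as t → ∞. -/
open MeasureTheory Filter Set Pointwise Metric EMetric ENNReal NNReal

private lemma cube_volume (n : ℕ) {t : ℝ} (ht : 0 < t) (z : Fin n → ℤ) :
    volume (Set.pi Set.univ fun i => Ico ((z i : ℝ) / t) (((z i : ℝ) + 1) / t)) =
      ENNReal.ofReal t⁻¹ ^ n := by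
  rw [volume_pi_pi]
  have : ∀ i : Fin n, volume (Ico ((z i : ℝ) / t) (((z i : ℝ) + 1) / t)) = ENNReal.ofReal t⁻¹ := by
    intro i
    rw [Real.volume_Ico]
    congr 1
    field_simp
    ring
  simp [this]

private lemma mem_cube_iff (n : ℕ) {t : ℝ} (ht : 0 < t) (z : Fin n → ℤ) (x : Fin n → ℝ) :
    x ∈ (Set.pi Set.univ fun i => Ico ((z i : ℝ) / t) (((z i : ℝ) + 1) / t)) ↔
      ∀ i, ⌊x i * t⌋ = z i := by
  simp only [Set.mem_pi, Set.mem_univ, forall_true_left, Set.mem_Ico]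
  refine forall_congr' fun i => ?_
  rw [Int.floor_eq_iff, div_le_iff₀ ht, lt_div_iff₀ ht]

/-- Core counting estimate for a fixed scaling factor `t > 0`. -/
private lemma core_estimate (n : ℕ) (C : Set (Fin n → ℝ)) (hC : IsCompact C) {t : ℝ}
    (ht : 0 < t) :
    volume {x : Fin n → ℝ | ENNReal.ofReal t⁻¹ < infEdist x Cᶜ} ≤
        ({z : Fin n → ℤ | (fun i => (z i : ℝ)) ∈ t • C}.ncard : ℝ≥0∞) * ENNReal.ofReal t⁻¹ ^ n ∧
      ({z : Fin n → ℤ | (fun i => (z i : ℝ)) ∈ t • C}.ncard : ℝ≥0∞) * ENNReal.ofReal t⁻¹ ^ n ≤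
        volume (cthickening t⁻¹ C) := by
  set A : Set (Fin n → ℤ) := {z : Fin n → ℤ | (fun i => (z i : ℝ)) ∈ t • C} with hA
  set cube : (Fin n → ℤ) → Set (Fin n → ℝ) :=
    fun z => Set.pi Set.univ fun i => Ico ((z i : ℝ) / t) (((z i : ℝ) + 1) / t) with hcube
  -- A is finite
  obtain ⟨R, hR⟩ := hC.isBounded.subset_closedBall 0
  have hAfin : A.Finite := by
    have hsub : A ⊆ Set.pi Set.univ fun _ : Fin n => Icc (⌈-(t * R)⌉) (⌊t * R⌋) := by
      intro z hz
      obtain ⟨c, hc, hzc⟩ := hz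
      have hcball := hR hc
      simp only [Metric.mem_closedBall, dist_zero_right] at hcball
      have hnorm : ‖(fun i => (z i : ℝ))‖ ≤ t * R := by
        rw [← hzc, norm_smul, Real.norm_eq_abs, abs_of_pos ht]
        exact mul_le_mul_of_nonneg_left hcball ht.le
      intro i _
      have h1 : |(z i : ℝ)| ≤ t * R := le_trans (by simpa using norm_le_pi_norm (fun i => (z i : ℝ)) i) hnorm
      rw [abs_le] at h1
      constructor
      · exact Int.ceil_le.2 (by exact_mod_cast h1.1)
      · exact Int.le_floor.2 (by exact_mod_cast h1.2)
    exact (Set.Finite.pi fun _ => Set.finite_Icc _ _).subset hsub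
  -- cubes are pairwise disjoint
  have hdisj : (↑hAfin.toFinset : Set (Fin n → ℤ)).PairwiseDisjoint cube := by
    intro z _ z' _ hne
    refine Set.disjoint_left.2 fun x hx hx' => hne ?_
    rw [hcube, mem_cube_iff n ht] at hx hx'
    funext i; rw [← hx i, hx' i]
  have hmeas : ∀ z ∈ hAfin.toFinset, MeasurableSet (cube z) :=
    fun z _ => MeasurableSet.univ_pi fun i => measurableSet_Ico
  have hvol_union : volume (⋃ z ∈ hAfin.toFinset, cube z) =
      (A.ncard : ℝ≥0∞) * ENNReal.ofReal t⁻¹ ^ n := by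
    rw [measure_biUnion_finset hdisj hmeas]
    have : ∀ z ∈ hAfin.toFinset, volume (cube z) = ENNReal.ofReal t⁻¹ ^ n :=
      fun z _ => cube_volume n ht z
    rw [Finset.sum_congr rfl this, Finset.sum_const, nsmul_eq_mul]
    rw [Set.ncard_eq_toFinset_card _ hAfin]
  constructor
  · -- lower: inner set covered by the cubes
    have hcover : {x : Fin n → ℝ | ENNReal.ofReal t⁻¹ < infEdist x Cᶜ} ⊆
        ⋃ z ∈ hAfin.toFinset, cube z := by
      intro x hx
      simp only [Set.mem_setOf_eq] at hx
      set z : Fin n → ℤ := fun i => ⌊x i * t⌋ with hz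
      have hxz : x ∈ cube z := (mem_cube_iff n ht z x).2 fun i => rfl
      set y : Fin n → ℝ := fun i => (z i : ℝ) / t with hy
      have hdistxy : dist x y ≤ t⁻¹ := by
        rw [dist_pi_le_iff (inv_nonneg.2 ht.le)]
        intro i
        have h1 : (z i : ℝ) / t ≤ x i ∧ x i < ((z i : ℝ) + 1) / t := by
          have := (mem_cube_iff n ht z x).1 hxz i
          constructor
          · rw [div_le_iff₀ ht]; nlinarith [Int.floor_le (x i * t)]
          · rw [lt_div_iff₀ ht]; nlinarith [Int.lt_floor_add_one (x i * t)]
        have hdiff : ((z i : ℝ) + 1) / t - (z i : ℝ) / t = t⁻¹ := by field_simp; ring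
        rw [Real.dist_eq, abs_le]
        have hy_i : y i = (z i : ℝ) / t := rfl
        constructor
        · rw [hy_i]; linarith [h1.2, inv_nonneg.2 ht.le]
        · rw [hy_i]; linarith [h1.1, h1.2]
      have hyC : y ∈ C := by
        by_contra hyc
        have h0 : infEdist y Cᶜ = 0 := infEdist_zero_of_mem hyc
        have h2 : infEdist x Cᶜ ≤ infEdist y Cᶜ + edist x y := infEdist_le_infEdist_add_edist
        rw [h0, zero_add, edist_dist] at h2
        exact absurd (lt_of_lt_of_le hx (h2.trans (ENNReal.ofReal_le_ofReal hdistxy)))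
          (lt_irrefl _)
      have hzA : z ∈ A := by
        rw [hA, Set.mem_setOf_eq]
        refine ⟨y, hyC, ?_⟩
        funext i
        simp only [hy, Pi.smul_apply, smul_eq_mul]
        field_simp
      exact Set.mem_biUnion (hAfin.mem_toFinset.2 hzA) hxz
    calc volume {x : Fin n → ℝ | ENNReal.ofReal t⁻¹ < infEdist x Cᶜ}
        ≤ volume (⋃ z ∈ hAfin.toFinset, cube z) := measure_mono hcover
      _ = _ := hvol_union
  · -- upper: cubes inside cthickening
    have hsub : (⋃ z ∈ hAfin.toFinset, cube z) ⊆ cthickening t⁻¹ C := by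
      intro x hx
      obtain ⟨z, hzA, hxz⟩ := Set.mem_iUnion₂.1 hx
      have hzA' : z ∈ A := hAfin.mem_toFinset.1 hzA
      set y : Fin n → ℝ := fun i => (z i : ℝ) / t with hy
      have hyC : y ∈ C := by
        rw [hA, Set.mem_setOf_eq, mem_smul_set_iff_inv_smul_mem₀ (ne_of_gt ht)] at hzA'
        convert hzA' using 1
        funext i
        simp only [hy, Pi.smul_apply, smul_eq_mul]
        field_simp
      have hdistxy : dist x y ≤ t⁻¹ := by
        rw [dist_pi_le_iff (inv_nonneg.2 ht.le)]
        intro i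
        have h1 : (z i : ℝ) / t ≤ x i ∧ x i < ((z i : ℝ) + 1) / t := by
          have := (mem_cube_iff n ht z x).1 hxz i
          constructor
          · rw [div_le_iff₀ ht, ← this]; exact Int.floor_le _
          · rw [lt_div_iff₀ ht, ← this]; exact Int.lt_floor_add_one _
        have hdiff : ((z i : ℝ) + 1) / t - (z i : ℝ) / t = t⁻¹ := by field_simp; ring
        rw [Real.dist_eq, abs_le]
        have hy_i : y i = (z i : ℝ) / t := rfl
        constructor
        · rw [hy_i]; linarith [h1.2, inv_nonneg.2 ht.le]
        · rw [hy_i]; linarith [h1.1, h1.2]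
      exact mem_cthickening_of_edist_le x y t⁻¹ C hyC
        (by rw [edist_dist]; exact ENNReal.ofReal_le_ofReal hdistxy)
    calc (A.ncard : ℝ≥0∞) * ENNReal.ofReal t⁻¹ ^ n
        = volume (⋃ z ∈ hAfin.toFinset, cube z) := hvol_union.symm
      _ ≤ volume (cthickening t⁻¹ C) := measure_mono hsub

private lemma count_div_eq (m : ℕ) {t : ℝ} (ht : 0 < t) (n : ℕ) :
    ((m : ℝ≥0∞) * ENNReal.ofReal t⁻¹ ^ n).toReal = (m : ℝ) / t ^ n := by
  rw [ENNReal.toReal_mul, ENNReal.toReal_pow, ENNReal.toReal_natCast,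
    ENNReal.toReal_ofReal (inv_nonneg.2 ht.le)]
  field_simp
  rw [one_div, inv_pow, mul_assoc, inv_mul_cancel₀ (pow_ne_zero _ ht.ne'), mul_one]

theorem minkowski_lattice_count_convex
    (n : ℕ) (C : Set (Fin n → ℝ)) (hC : IsCompact C) (hconv : Convex ℝ C) :
    Tendsto (fun t : ℝ =>
      (({z : Fin n → ℤ | (fun i => (z i : ℝ)) ∈ t • C}.ncard : ℝ)) / t ^ n)
      atTop (nhds (volume C).toReal) := by
  have hvolC : volume C ≠ ⊤ := hC.measure_lt_top.ne
  have hfr : volume (frontier C) = 0 := hconv.addHaar_frontier volume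
  have hint : volume (interior C) = volume C := by
    refine le_antisymm (measure_mono interior_subset) ?_
    calc volume C ≤ volume (interior C ∪ frontier C) := by
          refine measure_mono fun x hx => ?_
          by_cases h : x ∈ interior C
          · exact Or.inl h
          · exact Or.inr ⟨subset_closure hx, h⟩
      _ ≤ volume (interior C) + volume (frontier C) := measure_union_le _ _
      _ = volume (interior C) := by rw [hfr, add_zero]
  -- upper limit function
  have hcth_fin : ∀ δ : ℝ, volume (cthickening δ C) ≠ ⊤ :=
    fun δ => (hC.cthickening).measure_lt_top.ne
  have hupper : Tendsto (fun t : ℝ => (volume (cthickening t⁻¹ C)).toReal) atTop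
      (nhds (volume C).toReal) := by
    have h1 : Tendsto (fun r : ℝ => volume (cthickening r C)) (nhds 0) (nhds (volume C)) := by
      have := tendsto_measure_cthickening (μ := volume) (s := C) ⟨1, one_pos, hcth_fin 1⟩
      rwa [hC.isClosed.closure_eq] at this
    exact ((ENNReal.tendsto_toReal hvolC).comp h1).comp tendsto_inv_atTop_zero
  -- inner family
  set inr : ℝ → Set (Fin n → ℝ) := fun δ => {x | ENNReal.ofReal δ < infEdist x Cᶜ} with hinr
  have hmono : ∀ {a b : ℝ}, a ≤ b → inr b ⊆ inr a :=
    fun h x hx => lt_of_le_of_lt (ENNReal.ofReal_le_ofReal h) hx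
  have hunion : ⋃ k : ℕ, inr ((k : ℝ) + 1)⁻¹ = interior C := by
    ext x
    simp only [Set.mem_iUnion, hinr, Set.mem_setOf_eq]
    constructor
    · rintro ⟨k, hk⟩
      have h0 : 0 < infEdist x Cᶜ := lt_of_le_of_lt zero_le hk
      rw [(show 0 < infEdist x Cᶜ ↔ x ∉ closure Cᶜ from infEDist_pos_iff_notMem_closure), closure_compl] at h0
      simpa using h0
    · intro hx
      have hx' : x ∉ closure Cᶜ := by rw [closure_compl]; simpa using hx
      rw [← (show 0 < infEdist x Cᶜ ↔ x ∉ closure Cᶜ from infEDist_pos_iff_notMem_closure)] at hx'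
      obtain ⟨r, hr0, hr1, hr2⟩ := ENNReal.lt_iff_exists_real_btwn.1 hx'
      have hrpos : 0 < r := by
        by_contra h
        rw [ENNReal.ofReal_eq_zero.2 (le_of_not_gt h)] at hr1
        exact lt_irrefl _ hr1
      obtain ⟨k, hk⟩ := exists_nat_gt r⁻¹
      refine ⟨k, lt_of_le_of_lt (ENNReal.ofReal_le_ofReal ?_) hr2⟩
      rw [inv_le_comm₀ (by positivity) hrpos]
      exact le_trans hk.le (by linarith)
  have hlowtend : Tendsto (fun k : ℕ => (volume (inr ((k : ℝ) + 1)⁻¹)).toReal) atTop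
      (nhds (volume C).toReal) := by
    have h1 : Tendsto (fun k : ℕ => volume (inr ((k : ℝ) + 1)⁻¹)) atTop
        (nhds (volume (interior C))) := by
      rw [← hunion]
      refine tendsto_measure_iUnion_atTop fun i j hij => hmono ?_
      have : (i : ℝ) + 1 ≤ (j : ℝ) + 1 := by exact_mod_cast by omega
      exact inv_anti₀ (by positivity) this
    rw [hint] at h1
    exact (ENNReal.tendsto_toReal hvolC).comp h1
  have hcount_ne_top : ∀ t : ℝ,
      (({z : Fin n → ℤ | (fun i => (z i : ℝ)) ∈ t • C}.ncard : ℝ≥0∞)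
        * ENNReal.ofReal t⁻¹ ^ n) ≠ ⊤ :=
    fun t => ENNReal.mul_ne_top (ENNReal.natCast_ne_top _)
      (ENNReal.pow_ne_top ENNReal.ofReal_ne_top)
  rw [tendsto_order]
  constructor
  · -- lower bound
    intro b hb
    obtain ⟨k, hk⟩ := (hlowtend.eventually (eventually_gt_nhds hb)).exists
    filter_upwards [eventually_ge_atTop ((k : ℝ) + 1)] with t ht
    have htpos : 0 < t := lt_of_lt_of_le (by positivity) ht
    have hinv : t⁻¹ ≤ ((k : ℝ) + 1)⁻¹ := inv_anti₀ (by positivity) ht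
    have key := (core_estimate n C hC htpos).1
    calc b < (volume (inr ((k : ℝ) + 1)⁻¹)).toReal := hk
      _ ≤ (volume (inr t⁻¹)).toReal := by
          apply ENNReal.toReal_mono (ne_top_of_le_ne_top (hcount_ne_top t) key)
          exact measure_mono (hmono hinv)
      _ ≤ (({z : Fin n → ℤ | (fun i => (z i : ℝ)) ∈ t • C}.ncard : ℝ≥0∞)
            * ENNReal.ofReal t⁻¹ ^ n).toReal :=
          ENNReal.toReal_mono (hcount_ne_top t) key
      _ = _ := count_div_eq _ htpos n
  · -- upper bound
    intro b hb
    filter_upwards [hupper.eventually (eventually_lt_nhds hb), eventually_ge_atTop (1 : ℝ)]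
      with t h1 h2
    have htpos : 0 < t := lt_of_lt_of_le one_pos h2
    have key := (core_estimate n C hC htpos).2
    calc ({z : Fin n → ℤ | (fun i => (z i : ℝ)) ∈ t • C}.ncard : ℝ) / t ^ n
        = (({z : Fin n → ℤ | (fun i => (z i : ℝ)) ∈ t • C}.ncard : ℝ≥0∞)
            * ENNReal.ofReal t⁻¹ ^ n).toReal := (count_div_eq _ htpos n).symm
      _ ≤ (volume (cthickening t⁻¹ C)).toReal := ENNReal.toReal_mono (hcth_fin _) key
      _ < b := h1
end

section
/- Let V be a real vector space with a norm ‖·‖, let μ, ν be elements of a convex cone M in a real vector space of measures, equipped with linear maps h : M → V (homology) and m : M → ℝ≥0 (mass) satisfying ‖h(τ)‖ ≤ m(τ) for all τ ∈ M. Suppose there is a linear functional c on V with c(w) ≤ ‖w‖ for all w, c(h(μ+ν)) = ‖h(μ+ν)‖, and m(μ+ν) = ‖h(μ+ν)‖. Then for all a, b ≥ 0, m(aμ + bν) = ‖h(aμ + bν)‖. -/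
open MeasureTheory Filter Set

theorem minimizing_cone_combinations
    {V W : Type*} [NormedAddCommGroup V] [NormedSpace ℝ V]
    [AddCommGroup W] [Module ℝ W]
    (Mc : Set W) (hconvex : Convex ℝ Mc)
    (hcone : ∀ t : ℝ, 0 ≤ t → ∀ x ∈ Mc, t • x ∈ Mc)
    (hsum : ∀ x ∈ Mc, ∀ y ∈ Mc, x + y ∈ Mc)
    (h : W →ₗ[ℝ] V) (m : W →ₗ[ℝ] ℝ)
    (hm0 : ∀ τ ∈ Mc, 0 ≤ m τ)
    (hdom : ∀ τ ∈ Mc, ‖h τ‖ ≤ m τ)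
    (μ ν : W) (hμ : μ ∈ Mc) (hν : ν ∈ Mc)
    (c : V →ₗ[ℝ] ℝ) (hc : ∀ w, c w ≤ ‖w‖)
    (hceq : c (h (μ + ν)) = ‖h (μ + ν)‖)
    (hmin : m (μ + ν) = ‖h (μ + ν)‖) :
    ∀ a b : ℝ, 0 ≤ a → 0 ≤ b → m (a • μ + b • ν) = ‖h (a • μ + b • ν)‖ := by
  intro a b ha hb
  have key : c (h μ) = m μ ∧ c (h ν) = m ν := by
    have h1 : c (h μ) ≤ m μ := (hc (h μ)).trans (hdom μ hμ)
    have h2 : c (h ν) ≤ m ν := (hc (h ν)).trans (hdom ν hν)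
    have hsumeq : c (h μ) + c (h ν) = m μ + m ν := by
      have := hceq
      simp only [map_add] at this hmin ⊢
      linarith [this, hmin]
    constructor <;> linarith
  have hmem : a • μ + b • ν ∈ Mc := hsum _ (hcone a ha μ hμ) _ (hcone b hb ν hν)
  have hle : m (a • μ + b • ν) ≤ ‖h (a • μ + b • ν)‖ := by
    calc m (a • μ + b • ν) = a * m μ + b * m ν := by simp [mul_comm]
    _ = a * c (h μ) + b * c (h ν) := by rw [key.1, key.2]
    _ = c (h (a • μ + b • ν)) := by simp [mul_comm]
    _ ≤ ‖h (a • μ + b • ν)‖ := hc _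
  linarith [hdom _ hmem]
end

section
/- Let (V, ω) be a finite-dimensional symplectic real vector space, L ⊆ V a full-rank lattice with ω integer-valued on L, and W an isotropic subspace spanned by W ∩ L. Then the image of W^⊥ ∩ L in the quotient space W^⊥/W is a lattice (discrete and cocompact additive subgroup) in W^⊥/W. -/
open Module

/-- The symplectic orthogonal of a subspace. -/
def sympOrth {V : Type*} [AddCommGroup V] [Module ℝ V]
    (ω : V →ₗ[ℝ] V →ₗ[ℝ] ℝ) (W : Submodule ℝ V) : Submodule ℝ V where
  carrier := {v : V | ∀ w ∈ W, ω v w = 0}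
  add_mem' := fun {a b} ha hb w hw => by
    simp [map_add, LinearMap.add_apply, ha w hw, hb w hw]
  zero_mem' := fun w hw => by simp
  smul_mem' := fun c a ha w hw => by
    simp [map_smul, LinearMap.smul_apply, ha w hw]

open Module Submodule in
/-- A discrete ℤ-submodule of a f.d. real normed space has ℤ-rank equal to the
dimension of its real span. -/
lemma finrank_discrete_eq_finrank_span {X : Type*} [NormedAddCommGroup X] [NormedSpace ℝ X]
    [FiniteDimensional ℝ X] (Λ : Submodule ℤ X) [DiscreteTopology Λ] :
    finrank ℤ Λ = finrank ℝ (span ℝ (Λ : Set X)) := by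
  set N := span ℝ (Λ : Set X) with hN
  let f := N.subtype
  let Λ₀ : Submodule ℤ N := Λ.comap (f.restrictScalars ℤ)
  have hdisc : DiscreteTopology Λ₀ :=
    DiscreteTopology.preimage_of_continuous_injective (Λ : Set X)
      (LinearMap.continuous_of_finiteDimensional f) (injective_subtype _)
  have himg : f '' Λ₀ = Λ := by
    rw [← LinearMap.coe_restrictScalars ℤ f, ← Submodule.map_coe (f.restrictScalars ℤ),
      Submodule.map_comap_eq_self]
    exact fun x hx ↦ LinearMap.mem_range.mpr ⟨⟨x, Submodule.subset_span hx⟩, rfl⟩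
  have hzl : IsZLattice ℝ Λ₀ := ⟨by
    rw [← (Submodule.map_injective_of_injective (injective_subtype _)).eq_iff,
      Submodule.map_span, Submodule.map_top, range_subtype, himg]⟩
  have h1 : finrank ℤ Λ₀ = finrank ℝ N := ZLattice.rank ℝ Λ₀
  have e : Λ₀ ≃ₗ[ℤ] Λ := by
    refine LinearEquiv.ofBijective ((f.restrictScalars ℤ).restrict (p := Λ₀) (q := Λ)
      (fun x hx => hx)) ⟨?_, ?_⟩
    · intro a b hab
      rw [Subtype.ext_iff] at hab
      exact Subtype.ext (Subtype.ext hab)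
    · rintro ⟨y, hy⟩
      exact ⟨⟨⟨y, Submodule.subset_span hy⟩, hy⟩, rfl⟩
  rw [← e.finrank_eq, h1]

open Module Submodule in
lemma zint_rank_nullity {M N : Type*} [AddCommGroup M] [AddCommGroup N]
    [Module.Free ℤ M] [Module.Finite ℤ M] (ψ : M →ₗ[ℤ] N)
    [Module.Free ℤ (LinearMap.range ψ)] [Module.Finite ℤ (LinearMap.range ψ)] :
    finrank ℤ (LinearMap.ker ψ) + finrank ℤ (LinearMap.range ψ) = finrank ℤ M := by
  haveI : IsNoetherian ℤ M := isNoetherian_of_isNoetherianRing_of_finite ℤ M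
  haveI : Module.Finite ℤ (LinearMap.ker ψ) :=
    Module.Finite.iff_fg.mpr (IsNoetherian.noetherian _)
  haveI : NoZeroSMulDivisors ℤ (LinearMap.ker ψ) :=
    noZeroSMulDivisors_iff_right_eq_zero_of_smul.mpr fun r hr _ h =>
      Module.IsTorsionFree.isSMulRegular (IsRegular.of_ne_zero hr) (h.trans (smul_zero r).symm)
  haveI : Module.Free ℤ (LinearMap.ker ψ) := inferInstance
  obtain ⟨σ, hσ⟩ := Module.projective_lifting_property ψ.rangeRestrict LinearMap.id
    ψ.surjective_rangeRestrict
  let φ : (LinearMap.ker ψ × LinearMap.range ψ) →ₗ[ℤ] M :=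
    (LinearMap.ker ψ).subtype.coprod σ
  have hrr : ∀ x : LinearMap.range ψ, ψ.rangeRestrict (σ x) = x := fun x =>
    congrArg (fun g => g x) hσ
  have hker : ∀ x : LinearMap.ker ψ, ψ.rangeRestrict (x : M) = 0 := by
    intro x
    ext
    simpa using x.2
  have hbij : Function.Bijective φ := by
    constructor
    · rintro ⟨k, r⟩ ⟨k', r'⟩ h
      have h0 : (k : M) + σ r = (k' : M) + σ r' := h
      have h1 : r = r' := by
        have := congrArg ψ.rangeRestrict h0
        simpa [map_add, hrr, hker] using this
      have h2 : (k : M) = (k' : M) := by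
        rw [h1] at h0
        exact add_right_cancel h0
      exact Prod.ext (Subtype.ext h2) h1
    · intro x
      refine ⟨⟨⟨x - σ (ψ.rangeRestrict x), ?_⟩, ψ.rangeRestrict x⟩, ?_⟩
      · have : ψ (σ (ψ.rangeRestrict x)) = ψ x := congrArg Subtype.val (hrr (ψ.rangeRestrict x))
        simp [LinearMap.mem_ker, map_sub, this]
      · show (x - σ (ψ.rangeRestrict x)) + σ (ψ.rangeRestrict x) = x
        abel
  have e : (LinearMap.ker ψ × LinearMap.range ψ) ≃ₗ[ℤ] M := LinearEquiv.ofBijective φ hbij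
  rw [← e.finrank_eq, Module.finrank_prod]

open Module Submodule in
lemma key_span {V : Type*} [NormedAddCommGroup V] [NormedSpace ℝ V] [FiniteDimensional ℝ V]
    (ω : V →ₗ[ℝ] V →ₗ[ℝ] ℝ)
    (L : Submodule ℤ V) [DiscreteTopology L] [IsZLattice ℝ L]
    (W : Submodule ℝ V)
    (hint : ∀ x ∈ L, ∀ y ∈ L, ∃ k : ℤ, ω x y = (k : ℝ))
    (hW : W = Submodule.span ℝ ((W : Set V) ∩ (L : Set V))) :
    span ℝ ((L ⊓ (sympOrth ω W).restrictScalars ℤ : Submodule ℤ V) : Set V)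
      = sympOrth ω W := by
  classical
  set E := sympOrth ω W with hE
  set Λ : Submodule ℤ V := L ⊓ E.restrictScalars ℤ with hΛ
  -- basis of W made of lattice vectors
  obtain ⟨t, hts, htspan, htind⟩ := exists_linearIndependent ℝ ((W : Set V) ∩ (L : Set V))
  have htW : span ℝ t = W := by rw [htspan, ← hW]
  haveI htfin : Finite t := htind.finite
  haveI := Fintype.ofFinite t
  let vW : t → ↥W := fun i => ⟨i.1, htW ▸ subset_span i.2⟩
  have hindW : LinearIndependent ℝ vW := by
    apply LinearIndependent.of_comp W.subtype
    exact htind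
  have hspanW : ⊤ ≤ span ℝ (Set.range vW) := by
    intro x _
    have h1 : map W.subtype (span ℝ (Set.range vW)) = W := by
      rw [Submodule.map_span, ← Set.range_comp]
      have : Set.range (W.subtype ∘ vW) = t := by
        ext z; constructor
        · rintro ⟨i, rfl⟩; exact i.2
        · intro hz; exact ⟨⟨z, hz⟩, rfl⟩
      rw [this, htW]
    have hx : (x : V) ∈ map W.subtype (span ℝ (Set.range vW)) := by rw [h1]; exact x.2
    obtain ⟨y, hy, hyx⟩ := hx
    rwa [show y = x from Subtype.ext hyx] at hy
  let bW : Basis t ℝ ↥W := Basis.mk hindW hspanW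
  have hbW_apply : ∀ i : t, (bW i : V) = i.1 := fun i => by
    rw [show bW i = vW i from Basis.mk_apply hindW hspanW i]
  have hbWL : ∀ i : t, (bW i : V) ∈ L := fun i => by rw [hbW_apply]; exact (hts i.2).2
  -- the map θ
  set θ : V →ₗ[ℝ] (t → ℝ) := LinearMap.pi (fun i => ω.flip ((bW i : V))) with hθ
  have hθapp : ∀ v i, θ v i = ω v (bW i : V) := fun v i => rfl
  have hkerθ : LinearMap.ker θ = E := by
    ext v
    simp only [LinearMap.mem_ker, hE]
    constructor
    · intro hv w hw
      have hle : W ≤ LinearMap.ker (ω v) := by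
        rw [← htW]
        apply span_le.mpr
        intro z hz
        have hz0 : θ v ⟨z, hz⟩ = 0 := by rw [hv]; rfl
        rw [hθapp, hbW_apply] at hz0
        simp only [SetLike.mem_coe, LinearMap.mem_ker]
        exact hz0
      exact hle hw
    · intro hv
      funext i
      exact hv (bW i : V) (bW i).2
  -- the integer map ψ
  set ψ : ↥L →ₗ[ℤ] (t → ℝ) := (θ.restrictScalars ℤ) ∘ₗ L.subtype with hψ
  have hkerψ : LinearMap.ker ψ = Λ.comap L.subtype := by
    ext x
    simp only [LinearMap.mem_ker, hψ, LinearMap.comp_apply, LinearMap.coe_restrictScalars,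
      Submodule.coe_subtype, Submodule.mem_comap, hΛ, Submodule.mem_inf,
      Submodule.restrictScalars_mem]
    constructor
    · intro h; exact ⟨x.2, by rw [← hkerθ]; exact h⟩
    · rintro ⟨-, h⟩; rw [← hkerθ] at h; exact h
  set R₀ := LinearMap.range ψ with hR₀
  have hR₀sub : (R₀ : Set (t → ℝ)) ⊆ (span ℤ (Set.range ⇑(Pi.basisFun ℝ t)) : Set (t → ℝ)) := by
    rintro y ⟨x, rfl⟩
    have hcoords : ∀ i : t, ∃ k : ℤ, ψ x i = (k : ℝ) := fun i =>
      hint x.1 x.2 (bW i : V) (hbWL i)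
    choose k hk using hcoords
    have : ψ x = ∑ i : t, k i • (Pi.basisFun ℝ t) i := by
      funext j
      simp only [Finset.sum_apply, Pi.smul_apply, Pi.basisFun_apply]
      rw [Finset.sum_eq_single j]
      · simp [hk j]
      · intro b _ hbj; simp [Pi.single_apply, hbj.symm]
      · intro h; exact absurd (Finset.mem_univ j) h
    rw [this]
    exact Submodule.sum_mem _ fun i _ =>
      Submodule.smul_mem _ _ (subset_span (Set.mem_range_self i))
  haveI hdiscR₀ : DiscreteTopology R₀ :=
    DiscreteTopology.of_subset
      (inferInstanceAs (DiscreteTopology (span ℤ (Set.range ⇑(Pi.basisFun ℝ t))))) hR₀sub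
  haveI hdiscΛ : DiscreteTopology Λ :=
    DiscreteTopology.of_subset (inferInstance : DiscreteTopology L)
      (fun x hx => (Submodule.mem_inf.mp hx).1)
  -- rank computation
  have h1 : finrank ℤ (LinearMap.ker ψ) + finrank ℤ R₀ = finrank ℤ L := zint_rank_nullity ψ
  have h2 : finrank ℤ L = finrank ℝ V := ZLattice.rank ℝ L
  have h3 : finrank ℤ (LinearMap.ker ψ) = finrank ℤ Λ := by
    rw [hkerψ]
    exact (Submodule.comapSubtypeEquivOfLe inf_le_left).finrank_eq
  have h4 : finrank ℤ Λ = finrank ℝ (span ℝ (Λ : Set V)) := finrank_discrete_eq_finrank_span Λ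
  have h5 : finrank ℤ R₀ = finrank ℝ (span ℝ (R₀ : Set (t → ℝ))) :=
    finrank_discrete_eq_finrank_span R₀
  have h6 : span ℝ (R₀ : Set (t → ℝ)) = LinearMap.range θ := by
    have : (R₀ : Set (t → ℝ)) = θ '' (L : Set V) := by
      ext y; constructor
      · rintro ⟨x, rfl⟩; exact ⟨x.1, x.2, rfl⟩
      · rintro ⟨x, hx, rfl⟩; exact ⟨⟨x, hx⟩, rfl⟩
    rw [this, ← Submodule.map_span, IsZLattice.span_top, Submodule.map_top]
  have h7 : finrank ℝ (LinearMap.range θ) + finrank ℝ (LinearMap.ker θ) = finrank ℝ V :=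
    LinearMap.finrank_range_add_finrank_ker θ
  have h6' : finrank ℝ (span ℝ (R₀ : Set (t → ℝ))) = finrank ℝ (LinearMap.range θ) := by
    rw [h6]
  have h8 : finrank ℝ (span ℝ (Λ : Set V)) = finrank ℝ E := by
    rw [← hkerθ]; omega
  have h9 : span ℝ (Λ : Set V) ≤ E := by
    apply span_le.mpr
    intro x hx
    exact (Submodule.mem_inf.mp hx).2
  exact Submodule.eq_of_le_of_finrank_le h9 (le_of_eq h8.symm)

open Module Submodule in
set_option maxHeartbeats 2000000 in
theorem quotient_lattice_of_integer_isotropic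
    {V : Type*} [NormedAddCommGroup V] [NormedSpace ℝ V] [FiniteDimensional ℝ V]
    (ω : V →ₗ[ℝ] V →ₗ[ℝ] ℝ)
    (halt : ∀ v, ω v v = 0)
    (hnd : ∀ v, (∀ w, ω v w = 0) → v = 0)
    (L : Submodule ℤ V) [DiscreteTopology L] [IsZLattice ℝ L]
    (hint : ∀ x ∈ L, ∀ y ∈ L, ∃ k : ℤ, ω x y = (k : ℝ))
    (W : Submodule ℝ V)
    (hiso : W ≤ sympOrth ω W)
    (hW : W = Submodule.span ℝ ((W : Set V) ∩ (L : Set V))) :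
    ∀ S : Set (↥(sympOrth ω W) ⧸ W.comap (sympOrth ω W).subtype),
      S = {q | ∃ x : ↥(sympOrth ω W), (x : V) ∈ L ∧ Submodule.Quotient.mk x = q} →
      (∃ U ∈ nhds (0 : ↥(sympOrth ω W) ⧸ W.comap (sympOrth ω W).subtype), U ∩ S = {0}) ∧
      (∃ K : Set (↥(sympOrth ω W) ⧸ W.comap (sympOrth ω W).subtype),
        IsCompact K ∧ ∀ q, ∃ l ∈ S, q - l ∈ K) := by
  classical
  intro S hS
  set E := sympOrth ω W with hE
  set W' : Submodule ℝ ↥E := W.comap E.subtype with hW'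
  set Λ : Submodule ℤ V := L ⊓ E.restrictScalars ℤ with hΛ
  have hspanΛ : span ℝ (Λ : Set V) = E := key_span ω L W hint hW
  haveI hdiscΛ : DiscreteTopology Λ :=
    DiscreteTopology.of_subset (inferInstance : DiscreteTopology L)
      (fun x hx => (Submodule.mem_inf.mp hx).1)
  -- the quotient and its coordinates
  set d := finrank ℝ (↥E ⧸ W') with hd
  obtain ⟨le⟩ : Nonempty ((↥E ⧸ W') ≃ₗ[ℝ] (Fin d → ℝ)) :=
    ⟨(Module.finBasis ℝ (↥E ⧸ W')).equivFun⟩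
  set πE : ↥E →ₗ[ℝ] (Fin d → ℝ) := le.toLinearMap ∘ₗ W'.mkQ with hπE
  have hπEcont : Continuous πE := πE.continuous_of_finiteDimensional
  obtain ⟨E', hE'⟩ := Submodule.exists_isCompl E
  set P : V →ₗ[ℝ] ↥E := E.projectionOnto E' hE' with hP
  set pr : V →ₗ[ℝ] (Fin d → ℝ) := πE ∘ₗ P with hpr
  have hprE : ∀ x : ↥E, pr (x : V) = πE x := by
    intro x
    rw [hpr, LinearMap.comp_apply, Submodule.projectionOnto_apply_left]
  have hprW : ∀ x : V, x ∈ W → pr x = 0 := by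
    intro x hx
    rw [show x = ((⟨x, hiso hx⟩ : ↥E) : V) from rfl, hprE]
    rw [hπE, LinearMap.comp_apply]
    have : W'.mkQ ⟨x, hiso hx⟩ = 0 := (Submodule.Quotient.mk_eq_zero _).mpr hx
    rw [this, map_zero]
  set M : Submodule ℤ (Fin d → ℝ) := Submodule.map (pr.restrictScalars ℤ) Λ with hM
  have hMmem : ∀ y : Fin d → ℝ, y ∈ M ↔ ∃ x : V, (x ∈ L ∧ x ∈ E) ∧ pr x = y := by
    intro y
    constructor
    · rintro ⟨x, hx, rfl⟩
      exact ⟨x, ⟨(Submodule.mem_inf.mp hx).1, (Submodule.mem_inf.mp hx).2⟩, rfl⟩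
    · rintro ⟨x, ⟨h1, h2⟩, rfl⟩
      exact ⟨x, Submodule.mem_inf.mpr ⟨h1, h2⟩, rfl⟩
  have hMspan : span ℝ (M : Set (Fin d → ℝ)) = ⊤ := by
    have h1 : (M : Set (Fin d → ℝ)) = pr '' (Λ : Set V) := rfl
    rw [h1, ← Submodule.map_span, hspanΛ]
    rw [Submodule.eq_top_iff']
    intro y
    obtain ⟨q, hq⟩ := Submodule.mkQ_surjective W' (le.symm y)
    refine ⟨(q : V), q.2, ?_⟩
    rw [hprE, hπE, LinearMap.comp_apply, hq]
    simp
  -- discreteness of M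
  have hδ : ∃ δ : ℝ, 0 < δ ∧ δ ≤ 1 ∧ ∀ m ∈ M, ‖m‖ < δ → m = 0 := by
    -- a basis of W made of lattice vectors
    obtain ⟨t, hts, htspan, htind⟩ := exists_linearIndependent ℝ ((W : Set V) ∩ (L : Set V))
    have htW : span ℝ t = W := by rw [htspan, ← hW]
    haveI htfin : Finite t := htind.finite
    haveI := Fintype.ofFinite t
    let vW : t → ↥W := fun i => ⟨i.1, htW ▸ subset_span i.2⟩
    have hindW : LinearIndependent ℝ vW := by
      apply LinearIndependent.of_comp W.subtype
      exact htind
    have hspanW : ⊤ ≤ span ℝ (Set.range vW) := by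
      intro x _
      have h1 : map W.subtype (span ℝ (Set.range vW)) = W := by
        rw [Submodule.map_span, ← Set.range_comp]
        have h2 : Set.range (W.subtype ∘ vW) = t := by
          ext z; constructor
          · rintro ⟨i, rfl⟩; exact i.2
          · intro hz; exact ⟨⟨z, hz⟩, rfl⟩
        rw [h2, htW]
      have hx : (x : V) ∈ map W.subtype (span ℝ (Set.range vW)) := by rw [h1]; exact x.2
      obtain ⟨y, hy, hyx⟩ := hx
      rwa [show y = x from Subtype.ext hyx] at hy
    let bW : Basis t ℝ ↥W := Basis.mk hindW hspanW
    have hbW_apply : ∀ i : t, (bW i : V) = i.1 := fun i => by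
      rw [show bW i = vW i from Basis.mk_apply hindW hspanW i]
    have hbWL : ∀ i : t, (bW i : V) ∈ L := fun i => by rw [hbW_apply]; exact (hts i.2).2
    set RB := ∑ i : t, ‖bW i‖ with hRB
    -- complement of W' inside E and the section of πE
    obtain ⟨C', hC'⟩ := Submodule.exists_isCompl W'
    set ρ : ↥C' →ₗ[ℝ] (Fin d → ℝ) := πE ∘ₗ C'.subtype with hρ
    have hρbij : Function.Bijective ρ := by
      constructor
      · intro a b hab
        have h1 : πE ((a : ↥E) - (b : ↥E)) = 0 := by
          rw [map_sub]
          simpa [hρ] using sub_eq_zero.mpr hab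
        have h2 : W'.mkQ ((a : ↥E) - (b : ↥E)) = 0 := by
          apply le.injective
          simpa [hπE] using h1
        have h3 : ((a : ↥E) - (b : ↥E)) ∈ W' := by
          rwa [← Submodule.Quotient.mk_eq_zero W', ← Submodule.mkQ_apply]
        have h4 : ((a : ↥E) - (b : ↥E)) ∈ W' ⊓ C' := ⟨h3, C'.sub_mem a.2 b.2⟩
        rw [hC'.inf_eq_bot] at h4
        exact Subtype.ext (sub_eq_zero.mp h4)
      · intro y
        obtain ⟨q, hq⟩ := Submodule.mkQ_surjective W' (le.symm y)
        obtain ⟨u, c, hucq, -⟩ := Submodule.existsUnique_add_of_isCompl hC' q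
        refine ⟨c, ?_⟩
        have h1 : πE q = y := by rw [hπE, LinearMap.comp_apply, hq]; simp
        have h2 : πE (u : ↥E) = 0 := by
          rw [hπE, LinearMap.comp_apply, Submodule.mkQ_apply,
            (Submodule.Quotient.mk_eq_zero _).mpr u.2, map_zero]
        calc ρ c = πE ((u : ↥E) + c) - πE (u : ↥E) := by rw [map_add, h2, hρ]; simp
        _ = y := by rw [hucq, h1, h2, sub_zero]
    let g := LinearEquiv.ofBijective ρ hρbij
    let gc : (Fin d → ℝ) →L[ℝ] ↥C' := LinearMap.toContinuousLinearMap g.symm.toLinearMap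
    have hgc : ∀ y, ρ (gc y) = y := fun y => g.apply_symm_apply y
    set CB := ‖gc‖ with hCB
    set B := RB + CB with hB
    -- the relevant finite set of lattice points
    haveI : DiscreteTopology ↥L.toAddSubgroup := ‹DiscreteTopology ↥L›
    have hLclosed : IsClosed (L : Set V) :=
      AddSubgroup.isClosed_of_discrete (H := L.toAddSubgroup)
    have hfinL : ((L : Set V) ∩ Metric.closedBall 0 B).Finite := by
      have hcomp : IsCompact ((L : Set V) ∩ Metric.closedBall 0 B) :=
        (isCompact_closedBall (0 : V) B).inter_left hLclosed
      exact hcomp.finite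
        (isDiscrete_iff_discreteTopology.mpr (DiscreteTopology.of_subset (inferInstance : DiscreteTopology L)
          Set.inter_subset_left))
    have hfinΛ : ((Λ : Set V) ∩ Metric.closedBall 0 B).Finite :=
      hfinL.subset (Set.inter_subset_inter_left _ (fun x hx => (Submodule.mem_inf.mp hx).1))
    set T0 := pr '' ((Λ : Set V) ∩ Metric.closedBall 0 B) with hT0
    have hT0fin : T0.Finite := hfinΛ.image _
    -- key estimate
    have key : ∀ m ∈ M, ‖m‖ ≤ 1 → m ∈ T0 := by
      intro m hm hm1
      obtain ⟨x, ⟨hxL, hxE⟩, hprx⟩ := (hMmem m).mp hm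
      set c : ↥C' := gc m with hc
      have hρc : πE ((c : ↥E)) = m := hgc m
      have hprxE : πE ⟨x, hxE⟩ = m := by rw [← hprx]; exact (hprE ⟨x, hxE⟩).symm
      have hwE : x - ((c : ↥E) : V) ∈ E := E.sub_mem hxE (c : ↥E).2
      have hwW : x - ((c : ↥E) : V) ∈ W := by
        have h2 : πE (⟨x, hxE⟩ - (c : ↥E)) = 0 := by
          rw [map_sub, hρc, hprxE, sub_self]
        have h3 : W'.mkQ (⟨x, hxE⟩ - (c : ↥E)) = 0 := by
          apply le.injective
          simpa [hπE] using h2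
        have h3' : (⟨x, hxE⟩ - (c : ↥E)) ∈ W' := by
          rwa [← Submodule.Quotient.mk_eq_zero W', ← Submodule.mkQ_apply]
        exact Submodule.mem_comap.mp h3'
      set wW : ↥W := ⟨x - ((c : ↥E) : V), hwW⟩ with hwWdef
      set lam := ZSpan.floor bW wW with hlam
      have hsub : span ℤ (Set.range ⇑bW) ≤
          Submodule.comap (W.subtype.restrictScalars ℤ) L := by
        rw [span_le]
        rintro z ⟨i, rfl⟩
        exact hbWL i
      have hlamL : ((lam : ↥W) : V) ∈ L := hsub lam.2
      have hlamW : ((lam : ↥W) : V) ∈ W := (lam : ↥W).2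
      have hfr : ‖wW - (lam : ↥W)‖ ≤ RB := by
        have h4 := ZSpan.norm_fract_le bW wW
        rwa [ZSpan.fract_apply] at h4
      have hcnorm : ‖((c : ↥E) : V)‖ ≤ CB := by
        have h5 : ‖gc m‖ ≤ ‖gc‖ * ‖m‖ := gc.le_opNorm m
        have h6 : ‖gc‖ * ‖m‖ ≤ CB := by
          rw [hCB]
          exact mul_le_of_le_one_right (norm_nonneg gc) hm1
        calc ‖((c : ↥E) : V)‖ = ‖c‖ := by rw [Submodule.coe_norm, Submodule.coe_norm]
        _ ≤ CB := le_trans h5 h6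
      refine ⟨x - ((lam : ↥W) : V), ⟨?_, ?_⟩, ?_⟩
      · exact Submodule.mem_inf.mpr ⟨L.sub_mem hxL hlamL,
          Submodule.restrictScalars_mem ℤ E _ |>.mpr (E.sub_mem hxE (hiso hlamW))⟩
      · rw [Metric.mem_closedBall, dist_zero_right]
        have h7 : x - ((lam : ↥W) : V) = (x - ((c : ↥E) : V) - ((lam : ↥W) : V))
            + ((c : ↥E) : V) := by abel
        rw [h7]
        have h8 : ‖x - ((c : ↥E) : V) - ((lam : ↥W) : V)‖ ≤ RB := by
          have : x - ((c : ↥E) : V) - ((lam : ↥W) : V) = ((wW - (lam : ↥W) : ↥W) : V) := rfl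
          rw [this, ← Submodule.coe_norm]
          exact hfr
        calc ‖_ + _‖ ≤ ‖x - ((c : ↥E) : V) - ((lam : ↥W) : V)‖ + ‖((c : ↥E) : V)‖ :=
          norm_add_le _ _
        _ ≤ RB + CB := add_le_add h8 hcnorm
      · rw [map_sub, hprx, hprW _ hlamW, sub_zero]
    -- choose δ
    by_cases hne : (T0 \ {0}).Nonempty
    · obtain ⟨a, ⟨haT, ha0⟩, hmin⟩ :=
        Set.exists_min_image (T0 \ {0}) (fun z => ‖z‖) hT0fin.diff hne
      have ha0' : a ≠ 0 := ha0
      refine ⟨min 1 ‖a‖, lt_min one_pos (norm_pos_iff.mpr ha0'), min_le_left _ _, ?_⟩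
      intro m hm hlt
      by_contra hm0
      have h1 : ‖m‖ ≤ 1 := le_of_lt (lt_of_lt_of_le hlt (min_le_left _ _))
      have hmT : m ∈ T0 \ {0} := ⟨key m hm h1, hm0⟩
      have h2 : ‖a‖ ≤ ‖m‖ := hmin m hmT
      exact absurd hlt (not_lt.mpr (le_trans (min_le_right _ _) h2))
    · refine ⟨1, one_pos, le_refl 1, ?_⟩
      intro m hm hlt
      by_contra hm0
      exact hne ⟨m, key m hm hlt.le, hm0⟩
  obtain ⟨δ, hδ0, hδ1, hδprop⟩ := hδ
  haveI hdiscM : DiscreteTopology M := by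
    apply discreteTopology_iff_isOpen_singleton.mpr
    intro m
    have hset : {m} = (Subtype.val : ↥M → (Fin d → ℝ)) ⁻¹' Metric.ball (m : Fin d → ℝ) δ := by
      ext y
      simp only [Set.mem_singleton_iff, Set.mem_preimage, Metric.mem_ball]
      constructor
      · rintro rfl
        simpa using hδ0
      · intro hy
        have h1 : ((y : Fin d → ℝ) - (m : Fin d → ℝ)) ∈ M := M.sub_mem y.2 m.2
        have h2 : ‖(y : Fin d → ℝ) - (m : Fin d → ℝ)‖ < δ := by rwa [dist_eq_norm] at hy
        exact Subtype.ext (sub_eq_zero.mp (hδprop _ h1 h2))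
    rw [hset]
    exact continuous_subtype_val.isOpen_preimage _ Metric.isOpen_ball
  haveI hzlM : IsZLattice ℝ M := ⟨hMspan⟩
  constructor
  · -- discreteness of S
    refine ⟨⇑le ⁻¹' Metric.ball 0 δ, ?_, ?_⟩
    · have hopen : IsOpen (⇑le ⁻¹' Metric.ball 0 δ) := by
        rw [← (W'.isOpenQuotientMap_mkQ).isQuotientMap.isOpen_preimage]
        have hpre : ⇑W'.mkQ ⁻¹' (⇑le ⁻¹' Metric.ball 0 δ) = ⇑πE ⁻¹' Metric.ball 0 δ := rfl
        rw [hpre]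
        exact hπEcont.isOpen_preimage _ Metric.isOpen_ball
      apply hopen.mem_nhds
      simp only [Set.mem_preimage, map_zero, Metric.mem_ball, dist_self]
      exact hδ0
    · ext q
      simp only [Set.mem_inter_iff, Set.mem_singleton_iff]
      constructor
      · rintro ⟨hqU, hqS⟩
        rw [hS] at hqS
        obtain ⟨x, hxL, rfl⟩ := hqS
        have hval : le (Submodule.Quotient.mk x) = pr (x : V) := by
          rw [hprE x, hπE]; rfl
        have hmem : le (Submodule.Quotient.mk x) ∈ M := by
          rw [hMmem]
          exact ⟨(x : V), ⟨hxL, x.2⟩, hval.symm⟩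
        have hnorm : ‖le (Submodule.Quotient.mk x)‖ < δ := by
          simpa [Metric.mem_ball, dist_zero_right] using hqU
        have h0 : le (Submodule.Quotient.mk x) = 0 := hδprop _ hmem hnorm
        apply le.injective
        simpa [hW'] using h0
      · rintro rfl
        constructor
        · simp only [Set.mem_preimage, map_zero, Metric.mem_ball, dist_self]
          exact hδ0
        · rw [hS]
          exact ⟨0, Submodule.zero_mem L, by simp⟩
  · -- cocompactness
    haveI : Module.Finite ℤ ↥M := inferInstance
    haveI : Module.Free ℤ ↥M := inferInstance
    let b : Basis (Module.Free.ChooseBasisIndex ℤ ↥M) ℤ ↥M := Module.Free.chooseBasis ℤ ↥M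
    let bR : Basis (Module.Free.ChooseBasisIndex ℤ ↥M) ℝ (Fin d → ℝ) := b.ofZLatticeBasis ℝ M
    have hbRspan : span ℤ (Set.range ⇑bR) = M := b.ofZLatticeBasis_span ℝ
    set D := ZSpan.fundamentalDomain bR with hD
    have hK' : IsCompact (closure D) :=
      Metric.isCompact_of_isClosed_isBounded isClosed_closure
        (ZSpan.fundamentalDomain_isBounded bR).closure
    have hlecont : Continuous ⇑le.symm :=
      LinearMap.continuous_of_finiteDimensional le.symm.toLinearMap
    refine ⟨⇑le.symm '' closure D, hK'.image hlecont, ?_⟩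
    intro q
    obtain ⟨v, hv⟩ := (ZSpan.exist_unique_vadd_mem_fundamentalDomain bR (le q)).exists
    have hle' : span ℤ (Set.range ⇑bR) ≤ M := le_of_eq hbRspan
    have hvM : -(v : Fin d → ℝ) ∈ M := M.neg_mem (hle' v.2)
    obtain ⟨x₀, ⟨hx₀L, hx₀E⟩, hx₀⟩ := (hMmem _).mp hvM
    refine ⟨Submodule.Quotient.mk ⟨x₀, hx₀E⟩, by rw [hS]; exact ⟨⟨x₀, hx₀E⟩, hx₀L, rfl⟩, ?_⟩
    have hval : le (Submodule.Quotient.mk (⟨x₀, hx₀E⟩ : ↥E)) = pr x₀ := by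
      rw [hprE ⟨x₀, hx₀E⟩, hπE]; rfl
    have h1 : le (q - Submodule.Quotient.mk (⟨x₀, hx₀E⟩ : ↥E)) = (v : Fin d → ℝ) +ᵥ le q := by
      rw [map_sub, hval, hx₀, sub_neg_eq_add, vadd_eq_add]
      exact add_comm _ _
    have h2 : q - Submodule.Quotient.mk (⟨x₀, hx₀E⟩ : ↥E)
        = le.symm (le (q - Submodule.Quotient.mk (⟨x₀, hx₀E⟩ : ↥E))) := (le.symm_apply_apply _).symm
    rw [h2, h1]
    exact ⟨_, subset_closure hv, rfl⟩
end

section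
/- Let ‖·‖ be a norm on ℝⁿ and let F ⊆ ℝⁿ be a closed set that is a cone (tF ⊆ F for all t ≥ 0), and let π : ℝⁿ → ℝᵐ be a linear map such that the restriction π|_F is a bijection from F onto ℝᵐ. Then π|_F is a homeomorphism from F onto ℝᵐ. -/
open Set

theorem cone_projection_homeomorphism
    {E : Type*} [NormedAddCommGroup E] [NormedSpace ℝ E] [FiniteDimensional ℝ E]
    (m : ℕ) (F : Set E) (hclosed : IsClosed F)
    (hcone : ∀ t : ℝ, 0 ≤ t → ∀ x ∈ F, t • x ∈ F)
    (π : E →ₗ[ℝ] (Fin m → ℝ))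
    (hinj : Set.InjOn π F) (hsurj : π '' F = Set.univ) :
    ∃ e : F ≃ₜ (Fin m → ℝ), ∀ x : F, e x = π (x : E) := by
  have hπc : Continuous π := π.continuous_of_finiteDimensional
  -- 0 ∈ F
  have hFne : F.Nonempty := by
    rcases (hsurj ▸ Set.mem_univ (0 : Fin m → ℝ) : (0 : Fin m → ℝ) ∈ π '' F) with ⟨x, hx, -⟩
    exact ⟨x, hx⟩
  obtain ⟨x₀, hx₀⟩ := hFne
  have h0F : (0 : E) ∈ F := by simpa using hcone 0 le_rfl x₀ hx₀
  -- key bound: ∃ c > 0, ∀ x ∈ F, ‖x‖ ≤ c * ‖π x‖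
  have hbound : ∃ c : ℝ, 0 < c ∧ ∀ x ∈ F, ‖x‖ ≤ c * ‖π x‖ := by
    set S : Set E := F ∩ Metric.sphere 0 1 with hS
    rcases S.eq_empty_or_nonempty with hSe | hSne
    · refine ⟨1, one_pos, fun x hx => ?_⟩
      by_cases hx0 : x = 0
      · simp [hx0]
      · exfalso
        have hxn : (0:ℝ) < ‖x‖ := norm_pos_iff.2 hx0
        have : ‖x‖⁻¹ • x ∈ S := by
          refine ⟨hcone _ (inv_nonneg.2 hxn.le) x hx, ?_⟩
          simp [norm_smul, abs_of_pos (inv_pos.2 hxn), inv_mul_cancel₀ hxn.ne']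
        rw [hSe] at this; exact this
    · have hScomp : IsCompact S := (isCompact_sphere (0:E) 1).inter_left hclosed
      obtain ⟨z, hzS, hz⟩ := hScomp.exists_isMinOn hSne
        (continuous_norm.comp hπc).continuousOn
      have hzF : z ∈ F := hzS.1
      have hz1 : ‖z‖ = 1 := by simpa using hzS.2
      have hzne : z ≠ 0 := by intro h; rw [h] at hz1; simp at hz1
      have hπz : π z ≠ 0 := by
        intro h
        exact hzne (hinj hzF h0F (by simpa using h))
      have hc : (0:ℝ) < ‖π z‖ := norm_pos_iff.2 hπz
      refine ⟨‖π z‖⁻¹, inv_pos.2 hc, fun x hx => ?_⟩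
      by_cases hx0 : x = 0
      · simp [hx0]
      · have hxn : (0:ℝ) < ‖x‖ := norm_pos_iff.2 hx0
        have hu : ‖x‖⁻¹ • x ∈ S := by
          refine ⟨hcone _ (inv_nonneg.2 hxn.le) x hx, ?_⟩
          simp [norm_smul, abs_of_pos (inv_pos.2 hxn), inv_mul_cancel₀ hxn.ne']
        have := hz hu
        simp only [Function.comp, Set.mem_setOf_eq] at this
        have hπu : ‖π (‖x‖⁻¹ • x)‖ = ‖x‖⁻¹ * ‖π x‖ := by
          rw [map_smul, norm_smul, Real.norm_eq_abs, abs_of_pos (inv_pos.2 hxn)]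
        rw [hπu] at this
        have h2 := mul_le_mul_of_nonneg_left this hxn.le
        rw [← mul_assoc, mul_inv_cancel₀ hxn.ne', one_mul] at h2
        calc ‖x‖ = ‖π z‖⁻¹ * (‖x‖ * ‖π z‖) := by field_simp
          _ ≤ ‖π z‖⁻¹ * ‖π x‖ := by
              exact mul_le_mul_of_nonneg_left (by linarith) (inv_pos.2 hc).le
  obtain ⟨c, hc0, hc⟩ := hbound
  -- the map
  let g : F → (Fin m → ℝ) := fun x => π (x : E)
  have hgc : Continuous g := hπc.comp continuous_subtype_val
  have hgbij : Function.Bijective g := by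
    constructor
    · intro a b hab
      exact Subtype.ext (hinj a.2 b.2 hab)
    · intro y
      rcases (hsurj ▸ Set.mem_univ y : y ∈ π '' F) with ⟨x, hxF, hxy⟩
      exact ⟨⟨x, hxF⟩, hxy⟩
  -- g is proper
  have hproper : IsProperMap g := by
    rw [isProperMap_iff_isCompact_preimage]
    refine ⟨hgc, fun K hK => ?_⟩
    rw [Topology.IsEmbedding.isCompact_iff Topology.IsEmbedding.subtypeVal]
    have himg : Subtype.val '' (g ⁻¹' K) = F ∩ π ⁻¹' K := by
      ext x
      constructor
      · rintro ⟨⟨x, hxF⟩, hx, rfl⟩; exact ⟨hxF, hx⟩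
      · rintro ⟨hxF, hx⟩; exact ⟨⟨x, hxF⟩, hx, rfl⟩
    rw [himg]
    have hcl : IsClosed (F ∩ π ⁻¹' K) := hclosed.inter (hK.isClosed.preimage hπc)
    obtain ⟨R, hR⟩ := isBounded_iff_forall_norm_le.1 hK.isBounded
    have hbd : Bornology.IsBounded (F ∩ π ⁻¹' K) := by
      refine isBounded_iff_forall_norm_le.2 ⟨c * R, fun x hx => ?_⟩
      calc ‖x‖ ≤ c * ‖π x‖ := hc x hx.1
        _ ≤ c * R := by
            exact mul_le_mul_of_nonneg_left (hR _ hx.2) hc0.le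
    exact Metric.isCompact_of_isClosed_isBounded hcl hbd
  have hclosedmap : IsClosedMap g := hproper.isClosedMap
  let e : F ≃ (Fin m → ℝ) := Equiv.ofBijective g hgbij
  refine ⟨⟨e, hgc, ?_⟩, fun x => rfl⟩
  rw [continuous_iff_isClosed]
  intro C hC
  show IsClosed (⇑e.symm ⁻¹' C)
  have : e.symm ⁻¹' C = g '' C := by
    rw [← Equiv.image_eq_preimage_symm]; rfl
  rw [this]
  exact hclosedmap C hC
end

section
/- Let ‖·‖ be a norm on ℝⁿ, F ⊆ ℝⁿ a closed cone (tF ⊆ F for all t ≥ 0), and π : ℝⁿ → ℝᵐ a linear map whose restriction to F is a bijection onto ℝᵐ. Let P₁ = π(F ∩ B̄), where B̄ is the closed unit ball of ‖·‖. Then P₁ is compact, and for every nonzero h ∈ ℝᵐ there exists a unique λ > 0 such that λh lies in the topological boundary of P₁. -/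
open Set

theorem cone_projection_unit_part_compact_unique_boundary_ray
    {E : Type*} [NormedAddCommGroup E] [NormedSpace ℝ E] [FiniteDimensional ℝ E]
    (m : ℕ) (F : Set E) (hclosed : IsClosed F)
    (hcone : ∀ t : ℝ, 0 ≤ t → ∀ x ∈ F, t • x ∈ F)
    (π : E →ₗ[ℝ] (Fin m → ℝ))
    (hinj : Set.InjOn π F) (hsurj : π '' F = Set.univ) :
    IsCompact (π '' (F ∩ {x | ‖x‖ ≤ 1})) ∧
      ∀ h : Fin m → ℝ, h ≠ 0 →
        ∃! l : ℝ, 0 < l ∧ l • h ∈ frontier (π '' (F ∩ {x | ‖x‖ ≤ 1})) := by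
  have hπc : Continuous π := π.continuous_of_finiteDimensional
  have hball : {x : E | ‖x‖ ≤ 1} = Metric.closedBall (0 : E) 1 := by
    ext x; simp [Metric.mem_closedBall, dist_zero_right]
  have hKcpt : IsCompact (F ∩ {x : E | ‖x‖ ≤ 1}) := by
    rw [hball]; exact (isCompact_closedBall 0 1).inter_left hclosed
  set P1 : Set (Fin m → ℝ) := π '' (F ∩ {x | ‖x‖ ≤ 1}) with hP1def
  have hP1cpt : IsCompact P1 := hKcpt.image hπc
  have hP1closed : IsClosed P1 := hP1cpt.isClosed
  refine ⟨hP1cpt, ?_⟩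
  intro h hh
  -- choose the inverse map σ of π on F
  have hex : ∀ y : Fin m → ℝ, ∃ x, x ∈ F ∧ π x = y := by
    intro y
    have : y ∈ π '' F := by rw [hsurj]; trivial
    obtain ⟨x, hx, hxy⟩ := this
    exact ⟨x, hx, hxy⟩
  choose σ hσF hσπ using hex
  have hσeq : ∀ x ∈ F, σ (π x) = x := fun x hx => hinj (hσF _) hx (hσπ _)
  have h0F : (0 : E) ∈ F := by
    have := hcone 0 le_rfl (σ h) (hσF h)
    simpa using this
  -- membership criterion
  have hmemP1 : ∀ y : Fin m → ℝ, y ∈ P1 ↔ ‖σ y‖ ≤ 1 := by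
    intro y
    constructor
    · rintro ⟨x, ⟨hxF, hx1⟩, rfl⟩
      rwa [hσeq x hxF]
    · intro hy
      exact ⟨σ y, ⟨hσF y, hy⟩, hσπ y⟩
  set h' : E := σ h with hh'def
  have hπh' : π h' = h := hσπ h
  have hh'F : h' ∈ F := hσF h
  have hh'ne : h' ≠ 0 := by
    intro h0
    apply hh
    rw [← hπh', h0, map_zero]
  have hh'pos : 0 < ‖h'‖ := norm_pos_iff.mpr hh'ne
  -- scaling
  have hσsmul : ∀ l : ℝ, 0 ≤ l → σ (l • h) = l • h' := by
    intro l hl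
    have hmem : l • h' ∈ F := hcone l hl h' hh'F
    have : π (l • h') = l • h := by rw [map_smul, hπh']
    rw [← this, hσeq _ hmem]
  have hmeml : ∀ l : ℝ, 0 ≤ l → (l • h ∈ P1 ↔ l * ‖h'‖ ≤ 1) := by
    intro l hl
    rw [hmemP1, hσsmul l hl, norm_smul, Real.norm_of_nonneg hl]
  -- lower bound c ‖x‖ ≤ ‖π x‖ on F
  have hKc : IsCompact (F ∩ Metric.sphere (0 : E) 1) :=
    (isCompact_sphere 0 1).inter_left hclosed
  have hKne : (F ∩ Metric.sphere (0 : E) 1).Nonempty := by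
    refine ⟨‖h'‖⁻¹ • h', hcone _ (by positivity) _ hh'F, ?_⟩
    simp [norm_smul, abs_of_pos (inv_pos.mpr hh'pos), inv_mul_cancel₀ hh'pos.ne']
  obtain ⟨x₀, hx₀K, hx₀min⟩ :=
    hKc.exists_isMinOn hKne ((continuous_norm.comp hπc).continuousOn)
  have hx₀ne : x₀ ≠ 0 := by
    intro h0
    have : ‖x₀‖ = 1 := by simpa using hx₀K.2
    rw [h0] at this; simp at this
  have hcpos : 0 < ‖π x₀‖ := by
    rw [norm_pos_iff]
    intro h0
    exact hx₀ne (hinj hx₀K.1 h0F (by rw [h0, map_zero]))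
  set c : ℝ := ‖π x₀‖ with hcdef
  have hbound : ∀ x ∈ F, c * ‖x‖ ≤ ‖π x‖ := by
    intro x hxF
    rcases eq_or_ne x 0 with rfl | hxne
    · simp
    · have hxpos : 0 < ‖x‖ := norm_pos_iff.mpr hxne
      have hz : ‖x‖⁻¹ • x ∈ F ∩ Metric.sphere (0 : E) 1 := by
        refine ⟨hcone _ (by positivity) _ hxF, ?_⟩
        simp [norm_smul, abs_of_pos (inv_pos.mpr hxpos), inv_mul_cancel₀ hxpos.ne']
      have h2 : c ≤ ‖π (‖x‖⁻¹ • x)‖ := hx₀min hz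
      rw [map_smul, norm_smul, Real.norm_eq_abs, abs_of_pos (inv_pos.mpr hxpos)] at h2
      calc c * ‖x‖ ≤ (‖x‖⁻¹ * ‖π x‖) * ‖x‖ :=
            mul_le_mul_of_nonneg_right h2 (norm_nonneg x)
        _ = ‖π x‖ := by field_simp
  -- the candidate
  set l₀ : ℝ := ‖h'‖⁻¹ with hl₀def
  have hl₀pos : 0 < l₀ := inv_pos.mpr hh'pos
  have hfrontier_imp : ∀ l : ℝ, 0 < l → l • h ∈ frontier P1 → l = l₀ := by
    intro l hl hfr
    have hle : l * ‖h'‖ ≤ 1 := by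
      rw [← hmeml l hl.le]
      exact hP1closed.closure_eq ▸ hfr.1
    rcases lt_or_eq_of_le hle with hlt | heq
    · -- l • h would be interior: contradiction with frontier
      exfalso
      have hcl : l • h ∈ closure P1ᶜ := by
        have := frontier_eq_closure_inter_closure (s := P1) ▸ hfr
        exact this.2
      obtain ⟨y, hyB, hyt⟩ := mem_closure_iff_seq_limit.mp hcl
      -- σ ∘ y is bounded
      have hynorm : Filter.Tendsto (fun n => ‖y n‖) Filter.atTop (nhds ‖l • h‖) :=
        hyt.norm
      obtain ⟨R, hR⟩ := hynorm.bddAbove_range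
      have hRmem : ∀ n, ‖y n‖ ≤ R := fun n => hR ⟨n, rfl⟩
      have hσyb : ∀ n, σ (y n) ∈ F ∩ Metric.closedBall (0 : E) (R / c) := by
        intro n
        refine ⟨hσF _, ?_⟩
        rw [Metric.mem_closedBall, dist_zero_right]
        have h1 := hbound _ (hσF (y n))
        rw [hσπ (y n)] at h1
        rw [le_div_iff₀ hcpos, mul_comm]
        exact h1.trans (hRmem n)
      have hScpt : IsCompact (F ∩ Metric.closedBall (0 : E) (R / c)) :=
        (isCompact_closedBall 0 _).inter_left hclosed
      obtain ⟨w, hwS, φ, hφ, hwt⟩ := hScpt.tendsto_subseq hσyb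
      have hπw : π w = l • h := by
        have h1 : Filter.Tendsto (fun n => π (σ (y (φ n)))) Filter.atTop (nhds (π w)) :=
          (hπc.tendsto w).comp hwt
        have h2 : (fun n => π (σ (y (φ n)))) = fun n => y (φ n) := by
          funext n; exact hσπ _
        rw [h2] at h1
        exact tendsto_nhds_unique h1 (hyt.comp hφ.tendsto_atTop)
      have hweq : w = l • h' := by
        have hlh'F : l • h' ∈ F := hcone l hl.le h' hh'F
        apply hinj hwS.1 hlh'F
        rw [hπw, map_smul, hπh']
      have hwnorm : 1 ≤ ‖w‖ := by
        have h3 : ∀ n, 1 ≤ ‖σ (y (φ n))‖ := by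
          intro n
          by_contra hcon
          push_neg at hcon
          exact hyB (φ n) ((hmemP1 (y (φ n))).mpr hcon.le)
        exact le_of_tendsto_of_tendsto tendsto_const_nhds hwt.norm
          (Filter.Eventually.of_forall h3)
      rw [hweq, norm_smul, Real.norm_of_nonneg hl.le] at hwnorm
      linarith
    · rw [hl₀def]
      exact eq_inv_of_mul_eq_one_left heq
  refine ⟨l₀, ⟨hl₀pos, ?_⟩, fun l hl => hfrontier_imp l hl.1 hl.2⟩
  -- existence: l₀ • h ∈ frontier P1
  rw [frontier_eq_closure_inter_closure]
  constructor
  · apply subset_closure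
    rw [hmeml l₀ hl₀pos.le]
    rw [hl₀def, inv_mul_cancel₀ hh'pos.ne']
  · apply mem_closure_iff_seq_limit.mpr
    refine ⟨fun n => (l₀ + 1 / (n + 1)) • h, ?_, ?_⟩
    · intro n
      simp only [mem_compl_iff]
      rw [hmeml _ (by positivity)]
      push_neg
      have : (0:ℝ) < 1 / (n + 1 : ℝ) := by positivity
      have h1 : l₀ * ‖h'‖ = 1 := by rw [hl₀def, inv_mul_cancel₀ hh'pos.ne']
      nlinarith
    · have ht : Filter.Tendsto (fun n : ℕ => l₀ + 1 / (n + 1 : ℝ)) Filter.atTop (nhds l₀) := by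
        have := (tendsto_one_div_add_atTop_nhds_zero_nat :
          Filter.Tendsto (fun n : ℕ => 1 / ((n : ℝ) + 1)) Filter.atTop (nhds 0))
        simpa using (tendsto_const_nhds (x := l₀)).add this
      exact (ht.smul_const h)
end

section
/- Let ‖·‖ be a norm on ℝⁿ, F ⊆ ℝⁿ a closed cone, and π : ℝⁿ → ℝᵐ a linear map whose restriction to F is injective with π(F) = ℝᵐ. If (hₙ') is a sequence in F such that π(hₙ') converges in ℝᵐ, then (hₙ') is bounded in ℝⁿ. -/
open Filter

theorem cone_projection_proper
    {E : Type*} [NormedAddCommGroup E] [NormedSpace ℝ E] [FiniteDimensional ℝ E]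
    (m : ℕ) (F : Set E) (hclosed : IsClosed F) (h0 : (0 : E) ∈ F)
    (hcone : ∀ t : ℝ, 0 ≤ t → ∀ x ∈ F, t • x ∈ F)
    (π : E →ₗ[ℝ] (Fin m → ℝ))
    (hinj : Set.InjOn π F) (hsurj : π '' F = Set.univ)
    (h' : ℕ → E) (hmem : ∀ n, h' n ∈ F)
    (hconv : ∃ l : Fin m → ℝ, Tendsto (fun n => π (h' n)) atTop (nhds l)) :
    ∃ M : ℝ, ∀ n, ‖h' n‖ ≤ M := by
  by_contra hM
  push_neg at hM
  choose φ hφ using hM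
  set g : ℕ → ℕ := fun k => φ k with hg
  have hgt : ∀ k : ℕ, (k : ℝ) < ‖h' (g k)‖ := fun k => hφ k
  have hpos : ∀ k : ℕ, 0 < ‖h' (g k)‖ := fun k =>
    lt_of_le_of_lt (Nat.cast_nonneg k) (hgt k)
  set u : ℕ → E := fun k => ‖h' (g k)‖⁻¹ • h' (g k) with hu
  have humem : ∀ k, u k ∈ F := fun k =>
    hcone _ (inv_nonneg.mpr (norm_nonneg _)) _ (hmem (g k))
  have hunorm : ∀ k, ‖u k‖ = 1 := by
    intro k
    rw [hu]
    simp only [norm_smul, norm_inv, norm_norm]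
    exact inv_mul_cancel₀ (hpos k).ne'
  have husphere : ∀ k, u k ∈ Metric.sphere (0 : E) 1 := by
    intro k
    rw [mem_sphere_zero_iff_norm]
    exact hunorm k
  obtain ⟨x, hxs, ψ, hψmono, hψtend⟩ :=
    (isCompact_sphere (0 : E) 1).tendsto_subseq husphere
  have hxF : x ∈ F := hclosed.mem_of_tendsto hψtend
    (Eventually.of_forall fun k => humem (ψ k))
  -- bound on π ∘ h'
  obtain ⟨l, hl⟩ := hconv
  obtain ⟨C, hC⟩ := hl.norm.bddAbove_range
  have hC' : ∀ n, ‖π (h' n)‖ ≤ C := fun n => hC ⟨n, rfl⟩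
  have hcont : Continuous π := π.continuous_of_finiteDimensional
  -- π (u k) → 0
  have hπu : Tendsto (fun k => π (u k)) atTop (nhds 0) := by
    rw [tendsto_zero_iff_norm_tendsto_zero]
    apply squeeze_zero' (Eventually.of_forall fun k => norm_nonneg _)
      (g := fun k : ℕ => C / (k : ℝ))
    · filter_upwards [eventually_ge_atTop 1] with k hk1
      have : π (u k) = ‖h' (g k)‖⁻¹ • π (h' (g k)) := by
        rw [hu]; simp [map_smul]
      rw [this, norm_smul, norm_inv, norm_norm]
      have hk' : (0 : ℝ) < k := by exact_mod_cast hk1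
      rw [div_eq_mul_inv, mul_comm]
      gcongr
      · exact (norm_nonneg _).trans (hC' (g k))
      · exact hC' (g k)
      · exact (hgt k).le
    · exact tendsto_const_div_atTop_nhds_zero_nat C
  have hπuψ : Tendsto (fun k => π (u (ψ k))) atTop (nhds 0) :=
    hπu.comp hψmono.tendsto_atTop
  have hπx : Tendsto (fun k => π (u (ψ k))) atTop (nhds (π x)) :=
    (hcont.tendsto x).comp hψtend
  have hx0 : π x = 0 := tendsto_nhds_unique hπx hπuψ
  have : x = 0 := hinj hxF h0 (by rw [hx0, map_zero])
  rw [mem_sphere_zero_iff_norm, this, norm_zero] at hxs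
  exact zero_ne_one hxs
end
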